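/- Let p be a prime, n a positive integer, and let k_1, k_2, ..., k_m ≤ n and r_1 < r_2 < ... < r_m be positive integers such that ⌊n/p^{r_i}⌋ - ⌊k_i/p^{r_i}⌋ - ⌊(n-k_i)/p^{r_i}⌋ = 1 for all i = 1, 2, ..., m. Then there exists a single positive integer k ≤ n such that ⌊n/p^{r_i}⌋ - ⌊k/p^{r_i}⌋ - ⌊(n-k)/p^{r_i}⌋ = 1 for all i = 1, 2, ..., m. -/
import Mathlib

lemma carry_iff (q kk n : ℕ) (hq : 0 < q) (hk : kk ≤ n) :
    ((↑(n / q) - ↑(kk / q) - ↑((n - kk) / q) : ℤ) = 1) ↔ n % q < kk % q := by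
  have hnk : kk + (n - kk) = n := by omega
  have h1 : n / q = kk / q + (n - kk) / q + (if q ≤ kk % q + (n - kk) % q then 1 else 0) := by
    conv_lhs => rw [← hnk]
    exact Nat.add_div hq
  have hm1 : kk % q < q := Nat.mod_lt _ hq
  have hm2 : (n - kk) % q < q := Nat.mod_lt _ hq
  have hm3 : n % q = (kk % q + (n - kk) % q) % q := by rw [← Nat.add_mod, hnk]
  split_ifs at h1 with hc
  · have hsub : (kk % q + (n - kk) % q) % q = kk % q + (n - kk) % q - q := by
      rw [Nat.mod_eq_sub_mod hc, Nat.mod_eq_of_lt (by omega)]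
    constructor
    · intro _; omega
    · intro _; rw [h1]; push_cast; ring
  · have hsum : kk % q + (n - kk) % q < q := by omega
    have hmod : n % q = kk % q + (n - kk) % q := by rw [hm3, Nat.mod_eq_of_lt hsum]
    constructor
    · intro heq; exfalso; rw [h1] at heq; push_cast at heq; omega
    · intro hlt; omega

/-- Let `p` be a prime, `n` a positive integer, and `k₁, ..., kₘ ≤ n`,
`r₁ < r₂ < ⋯ < rₘ` positive integers such that
`⌊n/p^{rᵢ}⌋ - ⌊kᵢ/p^{rᵢ}⌋ - ⌊(n-kᵢ)/p^{rᵢ}⌋ = 1` for each `i`. Then there is a single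
positive integer `k ≤ n` with `⌊n/p^{rᵢ}⌋ - ⌊k/p^{rᵢ}⌋ - ⌊(n-k)/p^{rᵢ}⌋ = 1` for all `i`. -/
theorem exists_common_k (p n m : ℕ) (hp : p.Prime) (hn : 0 < n)
    (k r : Fin m → ℕ) (hkpos : ∀ i, 0 < k i) (hkn : ∀ i, k i ≤ n)
    (hrpos : ∀ i, 0 < r i) (hr : StrictMono r)
    (h : ∀ i, (↑(n / p ^ r i) - ↑(k i / p ^ r i) - ↑((n - k i) / p ^ r i) : ℤ) = 1) :
    ∃ K, 0 < K ∧ K ≤ n ∧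
      ∀ i, (↑(n / p ^ r i) - ↑(K / p ^ r i) - ↑((n - K) / p ^ r i) : ℤ) = 1 := by
  rcases Nat.eq_zero_or_pos m with hm | hm
  · subst hm
    exact ⟨n, hn, le_refl n, fun i => i.elim0⟩
  · set i₀ : Fin m := ⟨m - 1, by omega⟩ with hi₀
    set q := p ^ r i₀ with hqdef
    have hqpos : 0 < q := pow_pos hp.pos _
    have hq2 : 2 ≤ p := hp.two_le
    have hcar₀ : n % q < k i₀ % q := (carry_iff q (k i₀) n hqpos (hkn i₀)).mp (h i₀)
    have hqn : q ≤ n := by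
      by_contra hlt
      push_neg at hlt
      have e1 := Nat.mod_eq_of_lt (lt_of_le_of_lt (hkn i₀) hlt)
      have e2 := Nat.mod_eq_of_lt hlt
      have := hkn i₀
      omega
    refine ⟨n - q + 1, by omega, by omega, fun i => ?_⟩
    have hqi : 0 < p ^ r i := pow_pos hp.pos _
    rw [carry_iff _ _ _ hqi (by omega)]
    have hile : r i ≤ r i₀ := hr.monotone (by
      have := i.isLt
      exact Fin.le_def.mpr (by simp [hi₀]; omega))
    obtain ⟨t, ht⟩ : p ^ r i ∣ q := pow_dvd_pow p hile
    have hcar : n % p ^ r i < k i % p ^ r i := (carry_iff _ _ _ hqi (hkn i)).mp (h i)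
    have hklt : k i % p ^ r i < p ^ r i := Nat.mod_lt _ hqi
    have hqi1 : 1 < p ^ r i := by
      calc 1 < p := hq2
      _ ≤ p ^ r i := Nat.le_self_pow (by have := hrpos i; omega) p
    have hlt1 : n % p ^ r i + 1 < p ^ r i := by omega
    have h3 : (n + 1) % p ^ r i = n % p ^ r i + 1 := by
      rw [Nat.add_mod, Nat.mod_eq_of_lt hqi1, Nat.mod_eq_of_lt hlt1]
    have h2 : n - q + 1 = n + 1 - p ^ r i * t := by omega
    have h4 : (n - q + 1) % p ^ r i = n % p ^ r i + 1 := by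
      rw [h2, Nat.sub_mul_mod (by omega), h3]
    omega
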